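/- Boundedness of the projection P_h^*: for even k, there exists C(k) such that for every continuous function w on [-1,1], the unique polynomial P of degree ≤ k with ∫_{-1}^1 P v dx = ∫_{-1}^1 w v dx for all v of degree ≤ k-1 and (P(1)+P(-1))/2 = (w(1)+w(-1))/2 satisfies ‖P‖_{L^∞([-1,1])} ≤ C(k) ‖w‖_{L^∞([-1,1])}. -/

import Mathlib

/-- `P` is the special local projection `P_h^⋆` of `u` on the cell `[a,b]`. -/
def IsProjStar (k : ℕ) (a b : ℝ) (u : ℝ → ℝ) (P : Polynomial ℝ) : Prop :=
  P.degree ≤ (k : ℕ) ∧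
  (∀ v : Polynomial ℝ, v.degree < (k : WithBot ℕ) →
    (∫ x in a..b, P.eval x * v.eval x) = ∫ x in a..b, u x * v.eval x) ∧
  (P.eval b + P.eval a) / 2 = (u b + u a) / 2

open Polynomial MeasureTheory Set

private lemma coeff_comp_neg' (p : Polynomial ℝ) (n : ℕ) :
    (p.comp (-X)).coeff n = (-1)^n * p.coeff n := by
  induction p using Polynomial.induction_on' with
  | add p q hp hq => simp [Polynomial.add_comp, hp, hq]; ring
  | monomial i a =>
    have h1 : (monomial i a).comp (-X) = C (a * (-1)^i) * X^(i:ℕ) := by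
      rw [Polynomial.monomial_comp, neg_pow, show ((-1:ℝ[X])) = C (-1) from by simp,
        ← C_pow, ← mul_assoc, ← C_mul]
    rw [h1, coeff_C_mul, coeff_X_pow, coeff_monomial]
    split_ifs with h h'
    · subst h'; ring
    · simp_all
    · simp_all
    · ring

private lemma poly_eq_zero_of_integral_zero' (q : ℝ[X])
    (hnn : ∀ x ∈ Set.Icc (-1:ℝ) 1, 0 ≤ q.eval x)
    (hint : (∫ x in (-1:ℝ)..1, q.eval x) = 0) : q = 0 := by
  by_contra hq
  have habs : (∫ x in (-1:ℝ)..1, |q.eval x|) = 0 := by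
    rw [← hint]
    apply intervalIntegral.integral_congr
    intro x hx
    rw [Set.uIcc_of_le (by norm_num : (-1:ℝ) ≤ 1)] at hx
    exact abs_of_nonneg (hnn x hx)
  have hcont : Continuous fun x : ℝ => |q.eval x| := (q.continuous_aeval.abs)
  have hii : IntervalIntegrable (fun x : ℝ => |q.eval x|) volume (-1) 1 :=
    hcont.intervalIntegrable _ _
  have hiff := intervalIntegral.integral_pos_iff_support_of_nonneg_ae
    (μ := volume) (f := fun x : ℝ => |q.eval x|)
    (Filter.Eventually.of_forall (fun x => abs_nonneg _)) hii
  have hroots : ({x : ℝ | q.IsRoot x}).Finite := Polynomial.finite_setOf_isRoot hq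
  have hsub : Set.Ioo (-1:ℝ) 1 \ {x : ℝ | q.IsRoot x} ⊆
      Function.support (fun x : ℝ => |q.eval x|) ∩ Set.Ioc (-1:ℝ) 1 := by
    rintro x ⟨hx1, hx2⟩
    refine ⟨?_, hx1.1, le_of_lt hx1.2⟩
    simp only [Function.mem_support, ne_eq, abs_eq_zero]
    exact hx2
  have hpos : 0 < volume (Function.support (fun x : ℝ => |q.eval x|) ∩ Set.Ioc (-1:ℝ) 1) := by
    refine lt_of_lt_of_le ?_ (measure_mono hsub)
    have : volume (Set.Ioo (-1:ℝ) 1 \ {x : ℝ | q.IsRoot x}) = volume (Set.Ioo (-1:ℝ) 1) :=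
      measure_diff_null (hroots.measure_zero _)
    rw [this, Real.volume_Ioo]
    norm_num
  have : (0:ℝ) < ∫ x in (-1:ℝ)..1, |q.eval x| := hiff.mpr ⟨by norm_num, hpos⟩
  linarith [habs]

private lemma proj_inj' (k : ℕ) (hk : Even k) (P : Polynomial ℝ) (hdeg : P.degree ≤ (k:ℕ))
    (horth : ∀ v : Polynomial ℝ, v.degree < (k : WithBot ℕ) →
      (∫ x in (-1:ℝ)..1, P.eval x * v.eval x) = 0)
    (hbd : P.eval 1 + P.eval (-1) = 0) : P = 0 := by
  set Po : ℝ[X] := C (2⁻¹:ℝ) * (P - P.comp (-X)) with hPo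
  set Pe : ℝ[X] := C (2⁻¹:ℝ) * (P + P.comp (-X)) with hPe
  have hcoeff : ∀ m : ℕ, k ≤ m → P.coeff m = 0 ∨ ((-1:ℝ))^m = 1 := by
    intro m hm
    rcases eq_or_lt_of_le hm with h | h
    · right; rw [← h]; exact Even.neg_one_pow hk
    · left; exact Polynomial.coeff_eq_zero_of_degree_lt (lt_of_le_of_lt hdeg (by exact_mod_cast h))
  have hPodeg : Po.degree < (k : WithBot ℕ) := by
    rw [Polynomial.degree_lt_iff_coeff_zero]
    intro m hm
    rw [hPo, coeff_C_mul, coeff_sub, coeff_comp_neg']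
    rcases hcoeff m hm with h | h
    · rw [h]; ring
    · rw [h]; ring
  have h1 : (∫ x in (-1:ℝ)..1, P.eval x * Po.eval x) = 0 := horth Po hPodeg
  have hoddPo : ∀ x : ℝ, Po.eval (-x) = - Po.eval x := by
    intro x
    simp [hPo, Polynomial.eval_comp]
    ring
  have hevenPe : ∀ x : ℝ, Pe.eval (-x) = Pe.eval x := by
    intro x
    simp [hPe, Polynomial.eval_comp]
    ring
  have h2 : (∫ x in (-1:ℝ)..1, Pe.eval x * Po.eval x) = 0 := by
    have := intervalIntegral.integral_comp_neg (a := (-1:ℝ)) (b := 1)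
      (fun x => Pe.eval x * Po.eval x)
    simp only [hevenPe, hoddPo, neg_neg] at this
    simp only [mul_neg] at this
    rw [intervalIntegral.integral_neg] at this
    linarith
  have hPsum : Pe + Po = P := by
    rw [hPe, hPo]
    ring_nf
    rw [mul_right_comm, ← map_ofNat (C : ℝ →+* ℝ[X]) 2, ← C_mul]
    norm_num
  have h3 : (∫ x in (-1:ℝ)..1, (Po.eval x)^2) = 0 := by
    have e1 : ∀ x : ℝ, (Po.eval x)^2 = P.eval x * Po.eval x - Pe.eval x * Po.eval x := by
      intro x
      have h := congrArg (Polynomial.eval x) hPsum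
      simp only [Polynomial.eval_add] at h
      rw [← h]; ring
    have i1 : IntervalIntegrable (fun x => P.eval x * Po.eval x) volume (-1) 1 :=
      (P.continuous_aeval.mul Po.continuous_aeval).intervalIntegrable _ _
    have i2 : IntervalIntegrable (fun x => Pe.eval x * Po.eval x) volume (-1) 1 :=
      (Pe.continuous_aeval.mul Po.continuous_aeval).intervalIntegrable _ _
    calc (∫ x in (-1:ℝ)..1, (Po.eval x)^2)
        = ∫ x in (-1:ℝ)..1, (P.eval x * Po.eval x - Pe.eval x * Po.eval x) := by
          apply intervalIntegral.integral_congr; intro x _; exact e1 x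
      _ = (∫ x in (-1:ℝ)..1, P.eval x * Po.eval x) - ∫ x in (-1:ℝ)..1, Pe.eval x * Po.eval x :=
          intervalIntegral.integral_sub i1 i2
      _ = 0 := by rw [h1, h2]; ring
  have hPo0 : Po = 0 := by
    have := poly_eq_zero_of_integral_zero' (Po^2) (fun x _ => by simp [even_two.pow_nonneg]) ?_
    · exact pow_eq_zero_iff (n := 2) (by norm_num) |>.mp this
    · simpa using h3
  have hPP : P.comp (-X) = P := by
    have h0 : C (2⁻¹:ℝ) * (P - P.comp (-X)) = 0 := by rw [← hPo]; exact hPo0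
    rcases mul_eq_zero.mp h0 with h | h
    · exfalso; exact (by norm_num : (2⁻¹:ℝ) ≠ 0) (Polynomial.C_eq_zero.mp h)
    · have := sub_eq_zero.mp h; exact this.symm
  have hev : P.eval (-1) = P.eval 1 := by
    have := congrArg (Polynomial.eval 1) hPP
    rwa [Polynomial.eval_comp, Polynomial.eval_neg, Polynomial.eval_X] at this
  have hP1 : P.eval 1 = 0 := by linarith [hbd, hev]
  have hPm1 : P.eval (-1) = 0 := by linarith [hev]
  obtain ⟨Q, hQ⟩ := (Polynomial.dvd_iff_isRoot (a := (1:ℝ))).mpr hP1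
  have hQm1 : Q.eval (-1) = 0 := by
    have := hPm1
    rw [hQ] at this
    simp at this
    rcases this with h | h
    · linarith
    · exact h
  obtain ⟨R, hR⟩ := (Polynomial.dvd_iff_isRoot (a := (-1:ℝ))).mpr hQm1
  rw [hR] at hQ
  rcases eq_or_ne R 0 with hR0 | hR0
  · rw [hQ, hR0]; ring
  exfalso
  have hdegR : R.degree < (k : WithBot ℕ) := by
    have hdP : P.degree = 2 + R.degree := by
      rw [hQ, Polynomial.degree_mul, Polynomial.degree_mul, Polynomial.degree_X_sub_C,
        Polynomial.degree_X_sub_C]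
      rw [← add_assoc]
      norm_num
    have h2 : 2 + R.degree ≤ (k : WithBot ℕ) := hdP ▸ hdeg
    rcases Polynomial.degree_eq_natDegree hR0 with hn
    rw [hn] at h2 ⊢
    have : ((2 + R.natDegree : ℕ) : WithBot ℕ) ≤ (k : WithBot ℕ) := by
      push_cast
      exact_mod_cast h2
    have hle : 2 + R.natDegree ≤ k := by exact_mod_cast this
    exact_mod_cast Nat.lt_of_lt_of_le (Nat.lt_add_of_pos_left (by norm_num)) hle
  have hint0 := horth R hdegR
  set q : ℝ[X] := -((X - C 1) * ((X - C (-1)) * R) * R) with hq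
  have hq0 : q = 0 := by
    apply poly_eq_zero_of_integral_zero'
    · intro x hx
      simp only [hq, Polynomial.eval_neg, Polynomial.eval_mul, Polynomial.eval_sub,
        Polynomial.eval_X, Polynomial.eval_C]
      obtain ⟨hx1, hx2⟩ := hx
      have e : -((x - 1) * ((x - -1) * R.eval x) * R.eval x) = (1-x)*(1+x)*(R.eval x)^2 := by ring
      rw [e]
      exact mul_nonneg (mul_nonneg (by linarith) (by linarith)) (sq_nonneg _)
    · have : ∀ x : ℝ, q.eval x = -(P.eval x * R.eval x) := by
        intro x
        rw [hq, hQ]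
        simp only [Polynomial.eval_neg, Polynomial.eval_mul]
      rw [intervalIntegral.integral_congr (g := fun x => -(P.eval x * R.eval x))
        (fun x _ => this x)]
      rw [intervalIntegral.integral_neg, hint0, neg_zero]
  have : R = 0 := by
    have h1 : (X - C (1:ℝ)) ≠ 0 := Polynomial.X_sub_C_ne_zero 1
    have h2 : (X - C (-1:ℝ)) ≠ 0 := Polynomial.X_sub_C_ne_zero (-1)
    have := neg_eq_zero.mp hq0
    rcases mul_eq_zero.mp this with h | h
    · rcases mul_eq_zero.mp h with h' | h'
      · exact absurd h' h1
      · rcases mul_eq_zero.mp h' with h'' | h''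
        · exact absurd h'' h2
        · exact h''
    · exact h
  exact hR0 this

noncomputable def Mk (k : ℕ) : Matrix (Fin (k+1)) (Fin (k+1)) ℝ :=
  fun j i => if (j:ℕ) < k then ∫ x in (-1:ℝ)..1, x^((i:ℕ)+(j:ℕ))
    else ((1:ℝ)^(i:ℕ) + (-1:ℝ)^(i:ℕ))/2

private lemma mulVec_eq' (k : ℕ) (P : ℝ[X]) (hdeg : P.natDegree < k + 1) (j : Fin (k+1)) :
    (Mk k).mulVec (fun i => P.coeff i) j =
      if (j:ℕ) < k then ∫ x in (-1:ℝ)..1, P.eval x * x^(j:ℕ)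
      else (P.eval 1 + P.eval (-1))/2 := by
  have hP : ∀ x : ℝ, P.eval x = ∑ i ∈ Finset.range (k+1), P.coeff i * x ^ i :=
    fun x => Polynomial.eval_eq_sum_range' hdeg x
  rw [Matrix.mulVec, dotProduct]
  by_cases hj : (j:ℕ) < k
  · simp only [Mk, hj, if_true]
    rw [show (∫ x in (-1:ℝ)..1, P.eval x * x^(j:ℕ))
        = ∑ i ∈ Finset.range (k+1), (∫ x in (-1:ℝ)..1, x^(i+(j:ℕ))) * P.coeff i from ?_]
    · rw [← Fin.sum_univ_eq_sum_range (fun i => (∫ x in (-1:ℝ)..1, x^(i+(j:ℕ))) * P.coeff i)]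
    · rw [intervalIntegral.integral_congr
        (g := fun x => ∑ i ∈ Finset.range (k+1), P.coeff i * x ^ (i+(j:ℕ)))]
      · rw [intervalIntegral.integral_finset_sum]
        · congr 1; ext i
          rw [intervalIntegral.integral_const_mul]; ring
        · intro i _
          exact (Continuous.intervalIntegrable (by continuity) _ _)
      · intro x _
        simp only []
        rw [hP x, Finset.sum_mul]
        congr 1; ext i; ring
  · simp only [Mk, hj, if_false]
    rw [hP 1, hP (-1)]
    rw [← Fin.sum_univ_eq_sum_range (fun i => P.coeff i * (1:ℝ) ^ i),
        ← Fin.sum_univ_eq_sum_range (fun i => P.coeff i * (-1:ℝ) ^ i),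
        ← Finset.sum_add_distrib, Finset.sum_div]
    congr 1; ext i; ring

/-- orthogonality to monomials extends to all polynomials of degree < k -/
private lemma orth_ext' (k : ℕ) (P : ℝ[X])
    (h : ∀ j : ℕ, j < k → (∫ x in (-1:ℝ)..1, P.eval x * x^j) = 0)
    (v : ℝ[X]) (hv : v.degree < (k : WithBot ℕ)) :
    (∫ x in (-1:ℝ)..1, P.eval x * v.eval x) = 0 := by
  rcases eq_or_ne v 0 with rfl | hv0
  · simp
  have hnd : v.natDegree < k := by
    rwa [Polynomial.natDegree_lt_iff_degree_lt hv0]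
  have hv' : ∀ x : ℝ, v.eval x = ∑ j ∈ Finset.range k, v.coeff j * x ^ j :=
    fun x => Polynomial.eval_eq_sum_range' hnd x
  rw [intervalIntegral.integral_congr
    (g := fun x => ∑ j ∈ Finset.range k, v.coeff j * (P.eval x * x ^ j))]
  · rw [intervalIntegral.integral_finset_sum]
    · rw [Finset.sum_eq_zero]
      intro j hj
      rw [intervalIntegral.integral_const_mul, h j (Finset.mem_range.mp hj), mul_zero]
    · intro j _
      exact ((continuous_const.mul (P.continuous_aeval.mul (continuous_pow j))).intervalIntegrable _ _)
  · intro x _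
    simp only []
    rw [hv' x, Finset.mul_sum]
    congr 1; ext j; ring

/-- injectivity of the coefficient matrix -/
private lemma Mk_inj (k : ℕ) (hk : Even k) : Function.Injective ((Mk k).mulVecLin) := by
  rw [injective_iff_map_eq_zero]
  intro c hc
  set cc : ℕ → ℝ := fun i => if h : i < k+1 then c ⟨i, h⟩ else 0 with hcc
  set P : ℝ[X] := ∑ i ∈ Finset.range (k+1), C (cc i) * X ^ i with hPdef
  have hcoeffP : ∀ m : ℕ, P.coeff m = cc m := by
    intro m
    rw [hPdef, Polynomial.finset_sum_coeff]
    simp only [coeff_C_mul, coeff_X_pow, mul_ite, mul_one, mul_zero]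
    rw [Finset.sum_ite_eq (Finset.range (k+1)) m cc]
    by_cases hm : m ∈ Finset.range (k+1)
    · rw [if_pos hm]
    · rw [if_neg hm, hcc]
      simp only [dif_neg (show ¬ m < k+1 by simpa using hm)]
  have hdegP : P.degree ≤ (k : ℕ) := by
    rw [Polynomial.degree_le_iff_coeff_zero]
    intro m hm
    rw [hcoeffP, hcc]
    have h' : ¬ m < k + 1 := by
      push_neg
      exact_mod_cast Nat.succ_le_of_lt (by exact_mod_cast hm)
    simp only [dif_neg h']
  have hndP : P.natDegree < k + 1 :=
    Nat.lt_succ_of_le (Polynomial.natDegree_le_iff_degree_le.mpr hdegP)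
  have hcP : (fun i : Fin (k+1) => P.coeff i) = c := by
    funext i
    rw [hcoeffP]
    simp [hcc]
    intro h; exact absurd i.2 (by omega)
  have hzero : ∀ j : Fin (k+1), (Mk k).mulVec (fun i => P.coeff i) j = 0 := by
    intro j
    rw [hcP]
    exact congrFun hc j
  have horthm : ∀ j : ℕ, j < k → (∫ x in (-1:ℝ)..1, P.eval x * x^j) = 0 := by
    intro j hj
    have := hzero ⟨j, Nat.lt_succ_of_lt hj⟩
    rw [mulVec_eq' k P hndP] at this
    simpa [hj] using this
  have hbdry : P.eval 1 + P.eval (-1) = 0 := by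
    have := hzero ⟨k, Nat.lt_succ_self k⟩
    rw [mulVec_eq' k P hndP] at this
    simp only [lt_self_iff_false, if_false] at this
    have h2 : P.eval 1 + P.eval (-1) = 0 := by
      field_simp at this
      linarith
    exact h2
  have hP0 : P = 0 := proj_inj' k hk P hdegP (orth_ext' k P horthm) hbdry
  funext i
  rw [← hcP]
  simp [hP0]

theorem stmt15 (k : ℕ) (hk : Even k) : ∃ C : ℝ,
    ∀ w : ℝ → ℝ, ContinuousOn w (Set.Icc (-1:ℝ) 1) →
      ∀ P : Polynomial ℝ, IsProjStar k (-1) 1 w P →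
        ∀ x ∈ Set.Icc (-1:ℝ) 1,
          |P.eval x| ≤ C * sSup ((fun y => |w y|) '' Set.Icc (-1:ℝ) 1) := by
  -- the inverse of the coefficient matrix, as a continuous linear map
  have hinj : Function.Injective ((Mk k).mulVecLin) := Mk_inj k hk
  have hsurj : Function.Surjective ((Mk k).mulVecLin) :=
    LinearMap.injective_iff_surjective.mp hinj
  set e : (Fin (k+1) → ℝ) ≃ₗ[ℝ] (Fin (k+1) → ℝ) :=
    LinearEquiv.ofBijective ((Mk k).mulVecLin) ⟨hinj, hsurj⟩ with he
  set S := LinearMap.toContinuousLinearMap (e.symm.toLinearMap) with hS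
  refine ⟨(k+1) * ‖S‖ * 2, ?_⟩
  intro w hw P hproj x hx
  obtain ⟨hdegP, horthP, hbdP⟩ := hproj
  set N := sSup ((fun y => |w y|) '' Set.Icc (-1:ℝ) 1) with hN
  have hbdd : BddAbove ((fun y => |w y|) '' Set.Icc (-1:ℝ) 1) :=
    isCompact_Icc.bddAbove_image hw.abs
  have hub : ∀ y ∈ Set.Icc (-1:ℝ) 1, |w y| ≤ N :=
    fun y hy => le_csSup hbdd ⟨y, hy, rfl⟩
  have hN0 : 0 ≤ N := le_trans (abs_nonneg _) (hub 0 (by norm_num))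
  set c : Fin (k+1) → ℝ := fun i => P.coeff i with hc
  have hndP : P.natDegree < k + 1 :=
    Nat.lt_succ_of_le (Polynomial.natDegree_le_iff_degree_le.mpr hdegP)
  -- bound on the data vector
  have hdata : ‖(Mk k).mulVecLin c‖ ≤ 2 * N := by
    rw [pi_norm_le_iff_of_nonneg (by linarith)]
    intro j
    have hj := mulVec_eq' k P hndP j
    rw [Matrix.mulVecLin_apply]
    rw [show ((Mk k).mulVec c) j = (Mk k).mulVec (fun i => P.coeff i) j from rfl, hj]
    by_cases hjk : (j:ℕ) < k
    · rw [if_pos hjk]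
      have hX : (X ^ (j:ℕ) : ℝ[X]).degree < (k : WithBot ℕ) := by
        rw [Polynomial.degree_X_pow]
        exact_mod_cast hjk
      have := horthP (X ^ (j:ℕ)) hX
      simp only [Polynomial.eval_pow, Polynomial.eval_X] at this
      rw [Real.norm_eq_abs, this]
      have hbound := intervalIntegral.norm_integral_le_of_norm_le_const
        (a := (-1:ℝ)) (b := 1) (C := N) (f := fun x => w x * x ^ (j:ℕ)) ?_
      · rw [Real.norm_eq_abs] at hbound
        calc |∫ x in (-1:ℝ)..1, w x * x ^ (j:ℕ)| ≤ N * |1 - (-1)| := hbound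
          _ = 2 * N := by norm_num; ring
      · intro y hy
        rw [Set.uIoc_of_le (by norm_num : (-1:ℝ) ≤ 1)] at hy
        have hyIcc : y ∈ Set.Icc (-1:ℝ) 1 := ⟨le_of_lt hy.1, hy.2⟩
        rw [Real.norm_eq_abs, abs_mul, abs_pow]
        calc |w y| * |y| ^ (j:ℕ) ≤ N * 1 := by
              apply mul_le_mul (hub y hyIcc) ?_ (by positivity) hN0
              exact pow_le_one₀ (abs_nonneg y) (abs_le.mpr ⟨hyIcc.1, hyIcc.2⟩)
          _ = N := mul_one N
    · rw [if_neg hjk, hbdP, Real.norm_eq_abs]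
      have h1 : |w 1| ≤ N := hub 1 (by norm_num)
      have hm1 : |w (-1)| ≤ N := hub (-1) (by norm_num)
      rw [abs_div, abs_two]
      have habs : |w 1 + w (-1)| ≤ |w 1| + |w (-1)| := abs_add_le _ _
      linarith
  have hcbound : ‖c‖ ≤ ‖S‖ * (2 * N) := by
    have hid : S ((Mk k).mulVecLin c) = c := by
      have h1 : (Mk k).mulVecLin c = e c := rfl
      rw [hS]
      simp only [LinearMap.coe_toContinuousLinearMap', LinearEquiv.coe_coe, h1,
        LinearEquiv.symm_apply_apply]
    calc ‖c‖ = ‖S ((Mk k).mulVecLin c)‖ := by rw [hid]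
      _ ≤ ‖S‖ * ‖(Mk k).mulVecLin c‖ := S.le_opNorm _
      _ ≤ ‖S‖ * (2 * N) := mul_le_mul_of_nonneg_left hdata (norm_nonneg S)
  have heval : P.eval x = ∑ i ∈ Finset.range (k+1), P.coeff i * x ^ i :=
    Polynomial.eval_eq_sum_range' hndP x
  have hxabs : |x| ≤ 1 := abs_le.mpr ⟨hx.1, hx.2⟩
  have hterm : ∀ i ∈ Finset.range (k+1), |P.coeff i * x ^ i| ≤ ‖c‖ := by
    intro i hi
    rw [abs_mul, abs_pow]
    have h1 : |P.coeff i| ≤ ‖c‖ := by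
      have := norm_le_pi_norm c ⟨i, Finset.mem_range.mp hi⟩
      simpa [hc, Real.norm_eq_abs] using this
    calc |P.coeff i| * |x| ^ i ≤ ‖c‖ * 1 :=
        mul_le_mul h1 (pow_le_one₀ (abs_nonneg x) hxabs) (by positivity) (le_trans (abs_nonneg _) h1)
      _ = ‖c‖ := mul_one _
  calc |P.eval x| ≤ ∑ i ∈ Finset.range (k+1), |P.coeff i * x ^ i| := by
        rw [heval]; exact Finset.abs_sum_le_sum_abs _ _
    _ ≤ ∑ _i ∈ Finset.range (k+1), ‖c‖ := Finset.sum_le_sum hterm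
    _ = (k+1) * ‖c‖ := by rw [Finset.sum_const, Finset.card_range]; push_cast; ring
    _ ≤ (k+1) * (‖S‖ * (2 * N)) :=
        mul_le_mul_of_nonneg_left hcbound (by positivity)
    _ = (k+1) * ‖S‖ * 2 * N := by ring
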